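/- Let Ω be a domain in ℂ, let n ≥ 1, let f_k : Ω → ℂⁿ be holomorphic maps, and let a_k ∈ Ω with a_k → a₀ ∈ Ω and ‖f_k'(a_k)‖ ≥ k³ for all k ≥ 1. Then there exist points z_k ∈ Ω with z_k → a₀ such that, setting ρ_k := 1/‖f_k'(z_k)‖ and g_k(z) := f_k(z_k + ρ_k z), one has for all sufficiently large k: ρ_k·k ≤ 1/k², the map g_k is defined and holomorphic on the disc {|z| < k}, ‖g_k'(z)‖ ≤ 1 + 1/k for all |z| < k, and ‖g_k'(0)‖ = 1. -/

import Mathlib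

open Filter Topology Metric

set_option maxHeartbeats 1000000 in
theorem stmt6_aux (n : ℕ)
    (Ω : Set ℂ) (hΩo : IsOpen Ω)
    (f : ℕ → ℂ → EuclideanSpace ℂ (Fin n))
    (hf : ∀ k, DifferentiableOn ℂ (f k) Ω)
    (a : ℕ → ℂ)
    (hder : ∀ k : ℕ, 1 ≤ k → (k : ℝ) ^ 3 ≤ ‖deriv (f k) (a k)‖)
    (k : ℕ) (hk : 1 ≤ k) (hsub : closedBall (a k) (2 / (k : ℝ)) ⊆ Ω) :
    ∃ z ∈ closedBall (a k) (2 / (k : ℝ)),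
        (1 / ‖deriv (f k) z‖) * k ≤ 1 / (k : ℝ) ^ 2 ∧
        (∀ w ∈ ball (0 : ℂ) (k : ℝ),
          z + ((1 / ‖deriv (f k) z‖ : ℝ) : ℂ) * w ∈ Ω) ∧
        DifferentiableOn ℂ
          (fun w => f k (z + ((1 / ‖deriv (f k) z‖ : ℝ) : ℂ) * w))
          (ball (0 : ℂ) (k : ℝ)) ∧
        (∀ w ∈ ball (0 : ℂ) (k : ℝ),
          ‖deriv (fun w => f k (z + ((1 / ‖deriv (f k) z‖ : ℝ) : ℂ) * w)) w‖
            ≤ 1 + 1 / (k : ℝ)) ∧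
        ‖deriv (fun w => f k (z + ((1 / ‖deriv (f k) z‖ : ℝ) : ℂ) * w)) 0‖ = 1 := by
  have hk1 : (1 : ℝ) ≤ (k : ℝ) := by exact_mod_cast hk
  have hk0 : (0 : ℝ) < (k : ℝ) := by linarith
  set r : ℝ := 2 / (k : ℝ) with hr
  have hr0 : 0 < r := by positivity
  -- continuity of the derivative
  have hdc : ContinuousOn (fun w => ‖deriv (f k) w‖) Ω :=
    (((hf k).analyticOnNhd hΩo).deriv.continuousOn).norm
  -- the function to maximize
  set φ : ℂ → ℝ := fun w => (r - dist w (a k)) * ‖deriv (f k) w‖ with hφ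
  have hφc : ContinuousOn φ (closedBall (a k) r) :=
    ((continuous_const.sub (continuous_id.dist continuous_const)).continuousOn).mul
      (hdc.mono hsub)
  obtain ⟨z, hzD, hmax⟩ := (isCompact_closedBall (a k) r).exists_isMaxOn
    ⟨a k, mem_closedBall_self hr0.le⟩ hφc
  have hzΩ : z ∈ Ω := hsub hzD
  have hdz : dist z (a k) ≤ r := mem_closedBall.mp hzD
  set σ : ℝ := r - dist z (a k) with hσ
  set N : ℝ := ‖deriv (f k) z‖ with hN
  have hNnn : 0 ≤ N := norm_nonneg _
  have hM : r * (k : ℝ) ^ 3 ≤ σ * N := by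
    have h1 : φ (a k) ≤ φ z := hmax (mem_closedBall_self hr0.le)
    have h2 : φ (a k) = r * ‖deriv (f k) (a k)‖ := by simp [hφ]
    have h3 := hder k hk
    have : r * (k : ℝ) ^ 3 ≤ r * ‖deriv (f k) (a k)‖ := by
      exact mul_le_mul_of_nonneg_left h3 hr0.le
    calc r * (k : ℝ) ^ 3 ≤ φ (a k) := by rw [h2]; exact this
      _ ≤ φ z := h1
  have hrk3 : 0 < r * (k : ℝ) ^ 3 := by positivity
  have hσr : σ ≤ r := by simp [hσ]
  have hN0 : 0 < N := by nlinarith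
  have hσ0 : 0 < σ := by nlinarith
  set ρ : ℝ := 1 / N with hρ
  have hρ0 : 0 < ρ := by positivity
  have hρN : ρ * N = 1 := by rw [hρ, one_div, inv_mul_cancel₀ hN0.ne']
  -- ρ ≤ σ / (r k³)
  have hρle : ρ ≤ σ / (r * (k : ℝ) ^ 3) := by
    rw [hρ, div_le_div_iff₀ hN0 hrk3]
    nlinarith
  have hrk3' : r * (k : ℝ) ^ 3 = 2 * (k : ℝ) ^ 2 := by
    rw [hr, div_mul_eq_mul_div, div_eq_iff hk0.ne']; ring
  have hρk : ρ * k ≤ σ / (2 * k) := by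
    rw [hrk3'] at hρle
    calc ρ * k ≤ σ / (2 * (k : ℝ) ^ 2) * k := mul_le_mul_of_nonneg_right hρle hk0.le
      _ = σ / (2 * k) := by field_simp
  have hσ2k : σ / (2 * (k : ℝ)) ≤ σ / 2 := by
    apply div_le_div_of_nonneg_left hσ0.le (by norm_num) (by linarith)
  have hmem : ∀ w ∈ ball (0 : ℂ) (k : ℝ), z + ((ρ : ℝ) : ℂ) * w ∈ closedBall (a k) r ∧
      σ * (1 - 1 / (2 * (k : ℝ))) ≤ r - dist (z + ((ρ : ℝ) : ℂ) * w) (a k) := by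
    intro w hw
    have hwn : ‖w‖ < (k : ℝ) := by simpa using hw
    have hstep : ‖((ρ : ℝ) : ℂ) * w‖ ≤ ρ * k := by
      rw [norm_mul, Complex.norm_real, Real.norm_eq_abs, abs_of_pos hρ0]
      exact mul_le_mul_of_nonneg_left hwn.le hρ0.le
    have hdist : dist (z + ((ρ : ℝ) : ℂ) * w) (a k) ≤ dist z (a k) + ρ * k := by
      calc dist (z + ((ρ : ℝ) : ℂ) * w) (a k) ≤ dist (z + ((ρ : ℝ) : ℂ) * w) z + dist z (a k) :=
            dist_triangle _ _ _
        _ ≤ ρ * k + dist z (a k) := by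
            simp only [dist_eq_norm, add_sub_cancel_left]
            exact add_le_add_left hstep _
        _ = dist z (a k) + ρ * k := by ring
    constructor
    · rw [mem_closedBall]
      have : ρ * k ≤ σ := le_trans hρk (le_trans hσ2k (by linarith))
      calc dist (z + ((ρ : ℝ) : ℂ) * w) (a k) ≤ dist z (a k) + ρ * k := hdist
        _ ≤ dist z (a k) + σ := by linarith
        _ = r := by rw [hσ]; ring
    · have h1 : ρ * k ≤ σ / (2 * k) := hρk
      have h2 : r - dist (z + ((ρ : ℝ) : ℂ) * w) (a k) ≥ σ - σ / (2 * k) := by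
        rw [hσ] at *; linarith
      calc σ * (1 - 1 / (2 * (k : ℝ))) = σ - σ / (2 * k) := by
            field_simp
        _ ≤ r - dist (z + ((ρ : ℝ) : ℂ) * w) (a k) := h2
  have hmemΩ : ∀ w ∈ ball (0 : ℂ) (k : ℝ), z + ((ρ : ℝ) : ℂ) * w ∈ Ω := fun w hw =>
    hsub (hmem w hw).1
  have hda : ∀ w ∈ ball (0 : ℂ) (k : ℝ),
      HasDerivAt (fun w => f k (z + ((ρ : ℝ) : ℂ) * w))
        (((ρ : ℝ) : ℂ) • deriv (f k) (z + ((ρ : ℝ) : ℂ) * w)) w := by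
    intro w hw
    have hp : z + ((ρ : ℝ) : ℂ) * w ∈ Ω := hmemΩ w hw
    have hF : HasDerivAt (f k) (deriv (f k) (z + ((ρ : ℝ) : ℂ) * w))
        (z + ((ρ : ℝ) : ℂ) * w) :=
      (((hf k) _ hp).differentiableAt (hΩo.mem_nhds hp)).hasDerivAt
    have hA : HasDerivAt (fun w : ℂ => z + ((ρ : ℝ) : ℂ) * w) ((ρ : ℝ) : ℂ) w := by
      simpa using (((hasDerivAt_id w).const_mul (((ρ : ℝ) : ℂ))).const_add z)
    exact hF.scomp w hA
  have hnorm : ∀ w ∈ ball (0 : ℂ) (k : ℝ),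
      ‖deriv (fun w => f k (z + ((ρ : ℝ) : ℂ) * w)) w‖
        = ρ * ‖deriv (f k) (z + ((ρ : ℝ) : ℂ) * w)‖ := by
    intro w hw
    rw [(hda w hw).deriv, norm_smul, Complex.norm_real, Real.norm_eq_abs,
      abs_of_pos hρ0]
  refine ⟨z, hzD, ?_, hmemΩ,
    fun w hw => ((hda w hw).differentiableAt).differentiableWithinAt, ?_, ?_⟩
  · -- ρ k ≤ 1/k²
    have hσk : σ * (k : ℝ) ≤ 2 := by
      have := hσr
      rw [hr] at this
      exact (le_div_iff₀ hk0).mp this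
    have : σ / (2 * (k : ℝ)) ≤ 1 / (k : ℝ) ^ 2 := by
      rw [div_le_div_iff₀ (by positivity) (by positivity)]
      nlinarith
    calc (1 / ‖deriv (f k) z‖) * k = ρ * k := rfl
      _ ≤ σ / (2 * k) := hρk
      _ ≤ 1 / (k : ℝ) ^ 2 := this
  · -- bound 1 + 1/k
    intro w hw
    rw [hnorm w hw]
    set p := z + ((ρ : ℝ) : ℂ) * w with hp
    have hmax' : φ p ≤ σ * N := hmax (hmem w hw).1
    have hlow := (hmem w hw).2
    have hpn : 0 ≤ ‖deriv (f k) p‖ := norm_nonneg _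
    have key : σ * (1 - 1 / (2 * (k : ℝ))) * ‖deriv (f k) p‖ ≤ σ * N := by
      calc σ * (1 - 1 / (2 * (k : ℝ))) * ‖deriv (f k) p‖
          ≤ (r - dist p (a k)) * ‖deriv (f k) p‖ :=
            mul_le_mul_of_nonneg_right hlow hpn
        _ ≤ σ * N := hmax'
    have hck : (0:ℝ) < 1 - 1 / (2 * (k : ℝ)) := by
      rw [sub_pos, div_lt_one (by positivity)]; linarith
    rw [hρ, div_mul_eq_mul_div, one_mul, div_le_iff₀ hN0]
    have expand : 1 ≤ (1 + 1 / (k:ℝ)) * (1 - 1 / (2 * (k:ℝ))) := by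
      have h1 : (1 + 1 / (k:ℝ)) * (1 - 1 / (2 * (k:ℝ)))
          = 1 + 1 / (2*(k:ℝ)) - 1 / (2*(k:ℝ)^2) := by
        field_simp; ring
      have h2 : 1 / (2*(k:ℝ)^2) ≤ 1 / (2*(k:ℝ)) := by
        apply div_le_div_of_nonneg_left (by norm_num) (by positivity)
        nlinarith
      rw [h1]; linarith
    have key2 : (1 - 1 / (2 * (k:ℝ))) * ‖deriv (f k) p‖ ≤ N :=
      le_of_mul_le_mul_left (by rw [← mul_assoc]; exact key) hσ0
    refine le_of_mul_le_mul_left ?_ hck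
    calc (1 - 1 / (2 * (k:ℝ))) * ‖deriv (f k) p‖ ≤ N := key2
      _ ≤ (1 - 1 / (2 * (k:ℝ))) * ((1 + 1 / (k:ℝ)) * N) := by
          nlinarith [mul_le_mul_of_nonneg_right expand hNnn]
  · -- norm at 0 equals 1
    have h0 : (0 : ℂ) ∈ ball (0 : ℂ) (k : ℝ) := by simpa using hk0
    rw [hnorm 0 h0]
    simpa [← hN] using hρN

/-- **Rescaling step in the proof of the Marty-type criterion.**
Let `Ω ⊆ ℂ` be a domain, `f k : Ω → ℂⁿ` holomorphic, `a k ∈ Ω` with `a k → a₀ ∈ Ω` and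
`‖f k ' (a k)‖ ≥ k³`. Then there are `z k ∈ Ω` with `z k → a₀` such that, setting
`ρ k = 1/‖f k ' (z k)‖` and `g k (w) = f k (z k + ρ k w)`, for all large `k`:
`ρ k · k ≤ 1/k²`, `g k` is defined and holomorphic on `{|w| < k}`,
`‖g k ' (w)‖ ≤ 1 + 1/k` there, and `‖g k ' (0)‖ = 1`. -/
theorem stmt6 (n : ℕ) (hn : 1 ≤ n)
    (Ω : Set ℂ) (hΩo : IsOpen Ω) (hΩc : IsConnected Ω)
    (f : ℕ → ℂ → EuclideanSpace ℂ (Fin n))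
    (hf : ∀ k, DifferentiableOn ℂ (f k) Ω)
    (a : ℕ → ℂ) (a₀ : ℂ) (ha : ∀ k, a k ∈ Ω) (ha₀ : a₀ ∈ Ω)
    (halim : Tendsto a atTop (𝓝 a₀))
    (hder : ∀ k : ℕ, 1 ≤ k → (k : ℝ) ^ 3 ≤ ‖deriv (f k) (a k)‖) :
    ∃ z : ℕ → ℂ, (∀ k, z k ∈ Ω) ∧ Tendsto z atTop (𝓝 a₀) ∧
      ∀ᶠ k in atTop,
        (1 / ‖deriv (f k) (z k)‖) * k ≤ 1 / (k : ℝ) ^ 2 ∧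
        (∀ w ∈ ball (0 : ℂ) (k : ℝ),
          z k + ((1 / ‖deriv (f k) (z k)‖ : ℝ) : ℂ) * w ∈ Ω) ∧
        DifferentiableOn ℂ
          (fun w => f k (z k + ((1 / ‖deriv (f k) (z k)‖ : ℝ) : ℂ) * w))
          (ball (0 : ℂ) (k : ℝ)) ∧
        (∀ w ∈ ball (0 : ℂ) (k : ℝ),
          ‖deriv (fun w => f k (z k + ((1 / ‖deriv (f k) (z k)‖ : ℝ) : ℂ) * w)) w‖
            ≤ 1 + 1 / (k : ℝ)) ∧
        ‖deriv (fun w => f k (z k + ((1 / ‖deriv (f k) (z k)‖ : ℝ) : ℂ) * w)) 0‖ = 1 := by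
  classical
  obtain ⟨R, hR0, hRsub⟩ : ∃ R > 0, closedBall a₀ R ⊆ Ω := by
    obtain ⟨R, hR0, h⟩ := Metric.nhds_basis_closedBall.mem_iff.mp (hΩo.mem_nhds ha₀)
    exact ⟨R, hR0, h⟩
  set P : ℕ → Prop := fun k => 1 ≤ k ∧ closedBall (a k) (2 / (k : ℝ)) ⊆ Ω with hP
  have hEv : ∀ᶠ k in atTop, P k := by
    have h1 : ∀ᶠ k : ℕ in atTop, 1 ≤ k := eventually_ge_atTop 1
    have h2 : ∀ᶠ k : ℕ in atTop, dist (a k) a₀ < R / 2 :=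
      Metric.tendsto_nhds.mp halim (R / 2) (by positivity)
    have h3 : ∀ᶠ k : ℕ in atTop, 4 / R ≤ (k : ℝ) :=
      (tendsto_natCast_atTop_atTop (R := ℝ)).eventually_ge_atTop (4 / R)
    filter_upwards [h1, h2, h3] with k hk1 hk2 hk3
    have hk0 : (0 : ℝ) < (k : ℝ) := by exact_mod_cast hk1
    have hkr : 2 / (k : ℝ) ≤ R / 2 := by
      rw [div_le_div_iff₀ hk0 (by norm_num)]
      have : 4 / R * R ≤ (k : ℝ) * R := mul_le_mul_of_nonneg_right hk3 hR0.le
      rw [div_mul_cancel₀ 4 hR0.ne'] at this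
      linarith
    refine ⟨hk1, fun x hx => hRsub ?_⟩
    rw [mem_closedBall] at hx ⊢
    calc dist x a₀ ≤ dist x (a k) + dist (a k) a₀ := dist_triangle _ _ _
      _ ≤ R / 2 + R / 2 := add_le_add (hx.trans hkr) hk2.le
      _ = R := by ring
  set z : ℕ → ℂ := fun k =>
    if h : P k then (stmt6_aux n Ω hΩo f hf a hder k h.1 h.2).choose else a k with hzdef
  have hzball : ∀ k, P k → z k ∈ closedBall (a k) (2 / (k : ℝ)) := by
    intro k h
    simp only [hzdef, dif_pos h]
    exact (stmt6_aux n Ω hΩo f hf a hder k h.1 h.2).choose_spec.1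
  refine ⟨z, ?_, ?_, ?_⟩
  · intro k
    by_cases h : P k
    · exact h.2 (hzball k h)
    · simp only [hzdef, dif_neg h]; exact ha k
  · rw [tendsto_iff_dist_tendsto_zero]
    apply squeeze_zero' (Eventually.of_forall fun k => dist_nonneg)
      (g := fun k : ℕ => 2 / (k : ℝ) + dist (a k) a₀)
    · filter_upwards [hEv] with k hk
      calc dist (z k) a₀ ≤ dist (z k) (a k) + dist (a k) a₀ := dist_triangle _ _ _
        _ ≤ 2 / (k : ℝ) + dist (a k) a₀ := add_le_add_left (hzball k hk) _
    · have := tendsto_const_div_atTop_nhds_zero_nat (2 : ℝ)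
      have h2 := tendsto_iff_dist_tendsto_zero.mp halim
      simpa using this.add h2
  · filter_upwards [hEv] with k hk
    simp only [hzdef, dif_pos hk]
    exact (stmt6_aux n Ω hΩo f hf a hder k hk.1 hk.2).choose_spec.2
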